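/- Main discrete extension theorem: Let U ⊆ ℝⁿ, f : U × W → U be C¹, V : U → ℝ≥0 be C² with V⁻¹(0) compact nonempty and V(f(x,w)) = V(x) for all x ∈ U, w ∈ W. Suppose there exist b, ε > 0 with V⁻¹([0,ε]) compact and ‖∇V(x)‖² ≥ bV(x) on V⁻¹([0,ε]), and δ > 0 with S_δ := {x : dist(x, V⁻¹([0,ε])) < δ} ⊆ U. Let L := max{‖∇V(x)‖ : x ∈ V⁻¹([0,ε])} and d > λ_max(D²V(x)) for all x ∈ S_δ. If 0 < α < min(2/d, δ/L), then for any trajectory x̃_{k+1} = f(x̃_k, w_k) - α∇V(f(x̃_k, w_k)) with x̃_0 ∈ V⁻¹([0,ε]) and w_k ∈ W, one has V(x̃_k) ≤ (1 - b(α - α²d/2))^k V(x̃_0), i.e. the trajectory converges to V⁻¹(0) exponentially fast. -/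

import Mathlib

open Metric Set


open Metric Set
open scoped RealInnerProductSpace

lemma grad_step_lemma {n : ℕ} (V : EuclideanSpace ℝ (Fin n) → ℝ)
    (S : Set (EuclideanSpace ℝ (Fin n))) (hS : IsOpen S)
    (hVS : ContDiffOn ℝ 2 V S)
    (b d α : ℝ) (hb : 0 < b) (hα : 0 < α)
    (y : EuclideanSpace ℝ (Fin n))
    (hgrady : b * V y ≤ ‖gradient V y‖ ^ 2)
    (hseg : ∀ t ∈ Icc (0:ℝ) 1, y + t • (-(α • gradient V y)) ∈ S)
    (hd : ∀ x ∈ S, ∀ v : EuclideanSpace ℝ (Fin n), v ≠ 0 →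
      iteratedFDeriv ℝ 2 V x ![v, v] < d * ‖v‖ ^ 2)
    (hαd : 0 < α - α ^ 2 * d / 2) :
    V (y - α • gradient V y) ≤ (1 - b * (α - α ^ 2 * d / 2)) * V y := by
  set g := gradient V y with hg
  by_cases hg0 : g = 0
  · have hVy : V y ≤ 0 := by
      have : b * V y ≤ 0 := by simpa [hg0] using hgrady
      nlinarith [hαd, this, hb]
    have h1 : y - α • g = y := by simp [hg0]
    rw [h1]
    nlinarith [mul_nonneg (mul_nonneg hb.le hαd.le) (neg_nonneg.mpr hVy)]
  · set v : EuclideanSpace ℝ (Fin n) := -(α • g) with hv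
    have hv0 : v ≠ 0 := by
      simp only [hv, ne_eq, neg_eq_zero, smul_eq_zero, not_or]
      exact ⟨ne_of_gt hα, hg0⟩
    have hrw : y - α • g = y + v := by rw [hv, sub_eq_add_neg]
    rw [hrw]
    -- the line c t = y + t v
    set c : ℝ → EuclideanSpace ℝ (Fin n) := fun t => y + t • v with hcdef
    have hcder : ∀ t : ℝ, HasDerivAt c v t := by
      intro t
      have : HasDerivAt (fun t : ℝ => t • v) ((1:ℝ) • v) t :=
        (hasDerivAt_id t).smul_const v
      rw [one_smul] at this
      exact this.const_add y
    have hcS : ∀ t ∈ Icc (0:ℝ) 1, c t ∈ S := hseg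
    -- first derivative of V along the line
    have hVat : ∀ t ∈ Icc (0:ℝ) 1, ContDiffAt ℝ 2 V (c t) := fun t ht =>
      hVS.contDiffAt (hS.mem_nhds (hcS t ht))
    have hφder : ∀ t ∈ Icc (0:ℝ) 1,
        HasDerivAt (fun s => V (c s)) (fderiv ℝ V (c t) v) t := by
      intro t ht
      have h1 : DifferentiableAt ℝ V (c t) :=
        (hVat t ht).differentiableAt (by norm_num)
      exact h1.hasFDerivAt.comp_hasDerivAt t (hcder t)
    -- second derivative of V along the line
    have hψder : ∀ t ∈ Icc (0:ℝ) 1,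
        HasDerivAt (fun s => fderiv ℝ V (c s) v)
          (fderiv ℝ (fderiv ℝ V) (c t) v v) t := by
      intro t ht
      have h2 : DifferentiableAt ℝ (fderiv ℝ V) (c t) :=
        ((hVat t ht).fderiv_right (m := 1) (by norm_num)).differentiableAt (by norm_num)
      have hB : HasDerivAt (fun s => fderiv ℝ V (c s))
          (fderiv ℝ (fderiv ℝ V) (c t) v) t :=
        h2.hasFDerivAt.comp_hasDerivAt t (hcder t)
      have := hB.clm_apply (hasDerivAt_const t v)
      simpa using this
    -- Hessian bound along the line
    have hHess : ∀ t ∈ Icc (0:ℝ) 1,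
        fderiv ℝ (fderiv ℝ V) (c t) v v < d * ‖v‖ ^ 2 := by
      intro t ht
      have := hd (c t) (hcS t ht) v hv0
      rw [iteratedFDeriv_two_apply] at this
      simpa using this
    set M : ℝ := d * ‖v‖ ^ 2 with hM
    set ψ : ℝ → ℝ := fun s => fderiv ℝ V (c s) v with hψ
    -- ψ t ≤ ψ 0 + M t on [0,1]
    have hψcont : ContinuousOn ψ (Icc 0 1) := fun s hs =>
      ((hψder s hs).differentiableAt.continuousAt).continuousWithinAt
    have claimA : ∀ t ∈ Icc (0:ℝ) 1, ψ t ≤ ψ 0 + M * t := by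
      intro t ht
      rcases eq_or_lt_of_le ht.1 with h0 | h0
      · simp [← h0]
      · obtain ⟨ξ, hξ, hξeq⟩ := exists_hasDerivAt_eq_slope ψ
          (fun s => fderiv ℝ (fderiv ℝ V) (c s) v v) h0
          (hψcont.mono (Icc_subset_Icc le_rfl ht.2))
          (fun s hs => hψder s ⟨le_of_lt hs.1, le_trans (le_of_lt hs.2) ht.2⟩)
        have hξI : ξ ∈ Icc (0:ℝ) 1 := ⟨le_of_lt hξ.1, le_trans (le_of_lt hξ.2) ht.2⟩
        have hlt := hHess ξ hξI
        rw [hξeq] at hlt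
        have htpos : 0 < t := h0
        rw [div_lt_iff₀ (by simpa using htpos)] at hlt
        nlinarith [hlt]
    -- FTC
    have hφcont : ContinuousOn (fun s => V (c s)) (Icc 0 1) := fun s hs =>
      ((hφder s hs).differentiableAt.continuousAt).continuousWithinAt
    have hψint : IntervalIntegrable ψ MeasureTheory.volume 0 1 :=
      (hψcont.mono (by rw [uIcc_of_le] <;> norm_num)).intervalIntegrable
    have hFTC : ∫ s in (0:ℝ)..1, ψ s = V (c 1) - V (c 0) := by
      have := intervalIntegral.integral_eq_sub_of_hasDerivAt
        (f := fun s => V (c s)) (f' := ψ) (a := 0) (b := 1)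
        (fun s hs => hφder s (by rwa [uIcc_of_le (by norm_num : (0:ℝ) ≤ 1)] at hs)) hψint
      simpa using this
    have hlinint : IntervalIntegrable (fun t => ψ 0 + M * t) MeasureTheory.volume 0 1 :=
      (continuous_const.add (continuous_const.mul continuous_id)).intervalIntegrable 0 1
    have hmono : ∫ s in (0:ℝ)..1, ψ s ≤ ∫ t in (0:ℝ)..1, (ψ 0 + M * t) := by
      apply intervalIntegral.integral_mono_on (by norm_num) hψint hlinint
      intro t ht
      exact claimA t ht
    have hlinval : ∫ t in (0:ℝ)..1, (ψ 0 + M * t) = ψ 0 + M / 2 := by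
      have hMi : IntervalIntegrable (fun t : ℝ => M * t) MeasureTheory.volume 0 1 :=
        Continuous.intervalIntegrable (by fun_prop) 0 1
      rw [intervalIntegral.integral_add intervalIntegrable_const hMi,
        intervalIntegral.integral_const_mul, integral_id]
      norm_num
      ring
    -- ψ 0 = -α ‖g‖²
    have hψ0 : ψ 0 = -(α * ‖g‖ ^ 2) := by
      have hdiff : DifferentiableAt ℝ V y := by
        have := (hVat 0 (by norm_num)).differentiableAt (by norm_num)
        simpa [hcdef] using this
      have h1 : ψ 0 = fderiv ℝ V y v := by simp [hψ, hcdef]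
      have h2 : fderiv ℝ V y v = ⟪gradient V y, v⟫ := by
        rw [gradient]
        rw [InnerProductSpace.toDual_symm_apply]
      rw [h1, h2, hv, ← hg]
      rw [inner_neg_right, inner_smul_right, real_inner_self_eq_norm_sq]
    -- norm of v
    have hvnorm : ‖v‖ ^ 2 = α ^ 2 * ‖g‖ ^ 2 := by
      rw [hv, norm_neg, norm_smul, Real.norm_eq_abs, abs_of_pos hα]
      ring
    -- put it together
    have hkey : V (c 1) ≤ V (c 0) + (-(α * ‖g‖ ^ 2)) + M / 2 := by
      have h := hmono
      rw [hlinval, hFTC, hψ0] at h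
      linarith
    have hc0 : c 0 = y := by simp [hcdef]
    have hc1 : c 1 = y + v := by simp [hcdef]
    rw [hc0, hc1] at hkey
    have hM2 : M = d * (α ^ 2 * ‖g‖ ^ 2) := by rw [hM, hvnorm]
    rw [hM2] at hkey
    nlinarith [hgrady, hαd, hkey]


/-- Main discrete-time transversal extension theorem: under the assumptions
A1–A3, the modified trajectory `xt_{k+1} = f(xt_k, w_k) - α ∇V(f(xt_k, w_k))`
starting in `V⁻¹([0,ε])` satisfies `V(xt_k) ≤ (1 - b(α - α²d/2))^k V(xt_0)`,
i.e. it converges to `V⁻¹(0)` exponentially fast. -/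
theorem discrete_extension_main
    {n m : ℕ} (U : Set (EuclideanSpace ℝ (Fin n))) (W : Set (EuclideanSpace ℝ (Fin m)))
    (f : EuclideanSpace ℝ (Fin n) × EuclideanSpace ℝ (Fin m) → EuclideanSpace ℝ (Fin n))
    (hf : ContDiffOn ℝ 1 f (U ×ˢ W))
    (hfmaps : ∀ x ∈ U, ∀ w ∈ W, f (x, w) ∈ U)
    (V : EuclideanSpace ℝ (Fin n) → ℝ) (hV : ContDiffOn ℝ 2 V U)
    (hVnn : ∀ x ∈ U, 0 ≤ V x)
    -- A1: V⁻¹(0) compact and nonempty, V ∘ f = V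
    (hzero_cpt : IsCompact {x ∈ U | V x = 0}) (hzero_ne : {x ∈ U | V x = 0}.Nonempty)
    (hinv : ∀ x ∈ U, ∀ w ∈ W, V (f (x, w)) = V x)
    -- A2: ‖∇V‖² ≥ bV on the compact sublevel set K = V⁻¹([0,ε])
    (b ε : ℝ) (hb : 0 < b) (hε : 0 < ε)
    (K : Set (EuclideanSpace ℝ (Fin n))) (hK : K = {x ∈ U | V x ≤ ε})
    (hKc : IsCompact K)
    (hgrad : ∀ x ∈ K, b * V x ≤ ‖gradient V x‖ ^ 2)
    -- A3: S_δ ⊆ U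
    (δ : ℝ) (hδ : 0 < δ)
    (Sδ : Set (EuclideanSpace ℝ (Fin n))) (hSδ : Sδ = {x | Metric.infDist x K < δ})
    (hSδU : Sδ ⊆ U)
    -- L = max of ‖∇V‖ on K, d > λ_max(D²V) on S_δ
    (L : ℝ) (hLpos : 0 < L) (hL : IsGreatest ((fun x => ‖gradient V x‖) '' K) L)
    (d : ℝ) (hdpos : 0 < d)
    (hd : ∀ x ∈ Sδ, ∀ v : EuclideanSpace ℝ (Fin n), v ≠ 0 →
      iteratedFDeriv ℝ 2 V x ![v, v] < d * ‖v‖ ^ 2)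
    -- choice of α
    (α : ℝ) (hα : 0 < α) (hα2 : α < 2 / d) (hα3 : α < δ / L)
    -- trajectory
    (xt : ℕ → EuclideanSpace ℝ (Fin n)) (w : ℕ → EuclideanSpace ℝ (Fin m))
    (hw : ∀ k, w k ∈ W) (hx0 : xt 0 ∈ K)
    (hstep : ∀ k, xt (k + 1) = f (xt k, w k) - α • gradient V (f (xt k, w k))) :
    ∀ k, V (xt k) ≤ (1 - b * (α - α ^ 2 * d / 2)) ^ k * V (xt 0) := by
  set ρ : ℝ := 1 - b * (α - α ^ 2 * d / 2) with hρdef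
  have hαd : 0 < α - α ^ 2 * d / 2 := by
    have h2 : α * d < 2 := (lt_div_iff₀ hdpos).mp hα2
    nlinarith
  have hSopen : IsOpen Sδ := by
    rw [hSδ]; exact isOpen_lt (continuous_infDist_pt K) continuous_const
  have hVS : ContDiffOn ℝ 2 V Sδ := hV.mono hSδU
  have hαL : α * L < δ := (lt_div_iff₀ hLpos).mp hα3
  -- key one-step estimate
  have key : ∀ y ∈ K, V (y - α • gradient V y) ≤ ρ * V y ∧ y - α • gradient V y ∈ K := by
    intro y hy
    have hyU : y ∈ U := by rw [hK] at hy; exact hy.1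
    have hyε : V y ≤ ε := by rw [hK] at hy; exact hy.2
    have hgL : ‖gradient V y‖ ≤ L := hL.2 ⟨y, hy, rfl⟩
    have hseg : ∀ t ∈ Icc (0:ℝ) 1, y + t • (-(α • gradient V y)) ∈ Sδ := by
      intro t ht
      rw [hSδ]
      simp only [mem_setOf_eq]
      have h1 : dist (y + t • (-(α • gradient V y))) y = t * (α * ‖gradient V y‖) := by
        rw [dist_eq_norm, add_sub_cancel_left, norm_smul, norm_neg, norm_smul,
          Real.norm_eq_abs, Real.norm_eq_abs, abs_of_nonneg ht.1, abs_of_pos hα]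
      have h2 : Metric.infDist (y + t • (-(α • gradient V y))) K ≤
          dist (y + t • (-(α • gradient V y))) y := Metric.infDist_le_dist_of_mem hy
      have h3 : t * (α * ‖gradient V y‖) ≤ α * L := by
        nlinarith [mul_nonneg (mul_nonneg (sub_nonneg.mpr ht.2) hα.le) (norm_nonneg (gradient V y)),
          mul_nonneg hα.le (sub_nonneg.mpr hgL)]
      rw [h1] at h2
      linarith
    have hmain := grad_step_lemma V Sδ hSopen hVS b d α hb hα y (hgrad y hy) hseg hd hαd
    have hmem : y - α • gradient V y ∈ Sδ := by
      have := hseg 1 (by norm_num)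
      simpa [one_smul, sub_eq_add_neg] using this
    refine ⟨hmain, ?_⟩
    rw [hK]
    refine ⟨hSδU hmem, ?_⟩
    have hVy0 : 0 ≤ V y := hVnn y hyU
    nlinarith [mul_nonneg (mul_nonneg hb.le hαd.le) hVy0, hmain, hyε, hρdef]
  -- the trajectory stays in K
  have hKmem : ∀ k, xt k ∈ K := by
    intro k
    induction k with
    | zero => exact hx0
    | succ k ih =>
      have hkU : xt k ∈ U := by rw [hK] at ih; exact ih.1
      have hyK : f (xt k, w k) ∈ K := by
        rw [hK]
        refine ⟨hfmaps _ hkU _ (hw k), ?_⟩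
        rw [hinv _ hkU _ (hw k)]
        rw [hK] at ih; exact ih.2
      rw [hstep k]
      exact (key _ hyK).2
  -- one-step decay along the trajectory
  have hdecr : ∀ k, V (xt (k + 1)) ≤ ρ * V (xt k) := by
    intro k
    have ih := hKmem k
    have hkU : xt k ∈ U := by rw [hK] at ih; exact ih.1
    have hyK : f (xt k, w k) ∈ K := by
      rw [hK]
      refine ⟨hfmaps _ hkU _ (hw k), ?_⟩
      rw [hinv _ hkU _ (hw k)]
      rw [hK] at ih; exact ih.2
    rw [hstep k]
    calc V (f (xt k, w k) - α • gradient V (f (xt k, w k)))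
        ≤ ρ * V (f (xt k, w k)) := (key _ hyK).1
      _ = ρ * V (xt k) := by rw [hinv _ hkU _ (hw k)]
  have hVnn' : ∀ k, 0 ≤ V (xt k) := by
    intro k
    have := hKmem k
    rw [hK] at this
    exact hVnn _ this.1
  by_cases h0 : V (xt 0) = 0
  · have hzero : ∀ k, V (xt k) = 0 := by
      intro k
      induction k with
      | zero => exact h0
      | succ k ih =>
        have := hdecr k
        rw [ih, mul_zero] at this
        exact le_antisymm this (hVnn' (k + 1))
    intro k
    rw [hzero k, h0, mul_zero]
  · have h0' : 0 < V (xt 0) := lt_of_le_of_ne (hVnn' 0) (Ne.symm h0)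
    have hρ : 0 ≤ ρ := by
      by_contra hneg
      push_neg at hneg
      nlinarith [hdecr 0, hVnn' 1]
    intro k
    induction k with
    | zero => simp
    | succ k ih =>
      calc V (xt (k + 1)) ≤ ρ * V (xt k) := hdecr k
        _ ≤ ρ * (ρ ^ k * V (xt 0)) := mul_le_mul_of_nonneg_left ih hρ
        _ = ρ ^ (k + 1) * V (xt 0) := by ring
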